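/- For any positive integer m and any integer k with 1 ≤ k < m, the k-th power sums of the two sets {cos(2πa/m) : a = 0, 1, ..., m-1} and {cos(2π(a+1/2)/m) : a = 0, 1, ..., m-1} are equal; that is, ∑_{a=0}^{m-1} cos(2πa/m)^k = ∑_{a=0}^{m-1} cos(2π(a+1/2)/m)^k. -/

import Mathlib

open Real Finset

lemma geom_zero_aux {m : ℕ} (hm : 0 < m) {n : ℤ} (hn : n ≠ 0) (hnm : n.natAbs < m) :
    ∑ a ∈ Finset.range m, Complex.exp (2 * Real.pi * Complex.I * n / m) ^ a = 0 := by
  have hm' : (m : ℂ) ≠ 0 := Nat.cast_ne_zero.mpr hm.ne'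
  have hζ1 : Complex.exp (2 * Real.pi * Complex.I * n / m) ≠ 1 := by
    intro h
    rw [Complex.exp_eq_one_iff] at h
    obtain ⟨t, ht⟩ := h
    have h2 : (2 * (Real.pi : ℂ) * Complex.I) ≠ 0 := by
      simp [Real.pi_ne_zero, Complex.I_ne_zero, Complex.ofReal_ne_zero]
    have hcast : (n : ℂ) = t * m := by
      field_simp at ht
      have h3 : 2 * (Real.pi:ℂ) * Complex.I * n = 2 * (Real.pi:ℂ) * Complex.I * (t * m) := by
        linear_combination (2 * (Real.pi:ℂ) * Complex.I) * ht
      exact mul_left_cancel₀ h2 h3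
    have hnm' : n = t * m := by exact_mod_cast hcast
    rcases eq_or_ne t 0 with rfl | ht0
    · simp at hnm'; exact hn hnm'
    · have h1 : 1 ≤ t.natAbs := Int.one_le_abs (by exact_mod_cast ht0) |>.trans_eq (Int.abs_eq_natAbs t) |> fun h => by omega
      have : n.natAbs = t.natAbs * m := by rw [hnm', Int.natAbs_mul, Int.natAbs_natCast]
      nlinarith [hnm, this, h1]
  have hpow : Complex.exp (2 * Real.pi * Complex.I * n / m) ^ m = 1 := by
    rw [← Complex.exp_nat_mul]
    have : (m : ℂ) * (2 * Real.pi * Complex.I * n / m) = n * (2 * Real.pi * Complex.I) := by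
      field_simp
    rw [this, Complex.exp_int_mul_two_pi_mul_I]
  rw [geom_sum_eq hζ1, hpow, sub_self, zero_div]

lemma cos_pow_sum (m : ℕ) (hm : 0 < m) (k : ℕ) (hkm : k < m) (c : ℝ) :
    ∑ a ∈ Finset.range m, Complex.cos (2 * Real.pi * ((a : ℂ) + c) / m) ^ k =
      (∑ j ∈ Finset.range (k + 1), if 2 * j = k then ((k.choose j : ℂ) * m) else 0) / 2 ^ k := by
  have hm' : (m : ℂ) ≠ 0 := Nat.cast_ne_zero.mpr hm.ne'
  have key : ∀ a ∈ Finset.range m,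
      Complex.cos (2 * Real.pi * ((a : ℂ) + c) / m) ^ k =
      (∑ j ∈ Finset.range (k + 1),
        Complex.exp (2 * Real.pi * Complex.I * ((2 * (j:ℤ) - k : ℤ) : ℂ) / m) ^ a *
        Complex.exp (2 * Real.pi * Complex.I * ((2 * (j:ℤ) - k : ℤ) : ℂ) * c / m) * (k.choose j)) / 2 ^ k := by
    intro a _
    set θ : ℂ := 2 * Real.pi * ((a : ℂ) + c) / m with hθ
    have hcos : Complex.cos θ = (Complex.exp (θ * Complex.I) + Complex.exp (-θ * Complex.I)) / 2 := rfl
    rw [hcos, div_pow, add_pow]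
    congr 1
    refine Finset.sum_congr rfl fun j hj => ?_
    have hjk : j ≤ k := Nat.lt_succ_iff.mp (Finset.mem_range.mp hj)
    rw [← Complex.exp_nat_mul, ← Complex.exp_nat_mul, ← Complex.exp_nat_mul,
      ← Complex.exp_add, ← Complex.exp_add]
    congr 2
    have hcast : ((k - j : ℕ) : ℂ) = (k : ℂ) - j := by push_cast [hjk]; ring
    rw [hcast, hθ]
    push_cast
    field_simp
    ring
  rw [Finset.sum_congr rfl key, ← Finset.sum_div]
  congr 1
  rw [Finset.sum_comm]
  refine Finset.sum_congr rfl fun j hj => ?_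
  have hjk : j ≤ k := Nat.lt_succ_iff.mp (Finset.mem_range.mp hj)
  by_cases h2j : 2 * j = k
  · have hn0 : (2 * (j:ℤ) - k : ℤ) = 0 := by omega
    rw [hn0]
    simp only [Int.cast_zero, mul_zero, zero_mul, zero_div, Complex.exp_zero, one_pow,
      one_mul, Finset.sum_const, Finset.card_range, nsmul_eq_mul, if_pos h2j]
    ring
  · have hn : (2 * (j:ℤ) - k : ℤ) ≠ 0 := by omega
    have hnm : (2 * (j:ℤ) - k : ℤ).natAbs < m := by omega
    rw [if_neg h2j, ← Finset.sum_mul, ← Finset.sum_mul, geom_zero_aux hm hn hnm,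
      zero_mul, zero_mul]

theorem chebyshev_power_sums_match (m : ℕ) (hm : 0 < m) (k : ℕ) (hk1 : 1 ≤ k) (hkm : k < m) :
    ∑ a ∈ Finset.range m, (Real.cos (2 * Real.pi * a / m)) ^ k =
      ∑ a ∈ Finset.range m, (Real.cos (2 * Real.pi * ((a : ℝ) + 1/2) / m)) ^ k := by
  have h0 := cos_pow_sum m hm k hkm 0
  have h1 := cos_pow_sum m hm k hkm (1/2)
  have key := h0.trans h1.symm
  rw [← Complex.ofReal_inj]
  push_cast
  push_cast at key
  convert key using 3 <;> ring_nf
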